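/- Let ℓ ∈ ℕ and let ζ₁,...,ζ_N be i.i.d. mean-zero random vectors in ℝ^d with E(‖ζ₁‖^ℓ) < ∞. Then there exist polynomials R₁,...,R_{d^ℓ} of one variable, each of degree at most ⌊ℓ/2⌋ (with coefficients depending only on the joint moments of order ≤ ℓ of ζ₁), such that E((ζ₁ + ⋯ + ζ_N)^{⊗ℓ}) = (R₁(N),...,R_{d^ℓ}(N)) for all N ≥ ℓ. -/

import Mathlib

open MeasureTheory ProbabilityTheory
open scoped ENNReal

open Finset in
private lemma min'_eq_of_eq {α} [LinearOrder α] {s t : Finset α} (h : s = t) {hs : s.Nonempty}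
    {ht : t.Nonempty} : s.min' hs = t.min' ht := by subst h; rfl

section Kmin
open Finset
variable {n : ℕ} {β : Type*} [DecidableEq β]

/-- least element of the fiber of `g` through `t`. -/
def kmin (g : Fin n → β) (t : Fin n) : Fin n :=
  (univ.filter fun s => g s = g t).min' ⟨t, by simp⟩

lemma kmin_spec (g : Fin n → β) (t : Fin n) : g (kmin g t) = g t := by
  have := Finset.min'_mem (univ.filter fun s => g s = g t) ⟨t, by simp⟩
  simpa [kmin] using this

lemma kmin_congr (g : Fin n → β) {s t : Fin n} (h : g s = g t) : kmin g s = kmin g t :=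
  min'_eq_of_eq (by ext u; simp [h])

lemma kmin_eq_iff (g : Fin n → β) {s t : Fin n} : kmin g s = kmin g t ↔ g s = g t := by
  constructor
  · intro h
    calc g s = g (kmin g s) := (kmin_spec g s).symm
    _ = g (kmin g t) := by rw [h]
    _ = g t := kmin_spec g t
  · exact kmin_congr g

lemma kmin_kmin (g : Fin n → β) : kmin (kmin g) = kmin g := by
  funext t
  exact min'_eq_of_eq (by ext u; simp [kmin_eq_iff])

lemma kmin_apply_self {c : Fin n → Fin n} (hc : kmin c = c) (t : Fin n) : c (c t) = c t := by
  have h1 := kmin_congr c (kmin_spec c t)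
  rw [hc] at h1
  exact h1

/-- Characterization of the fiber of the kernel map. -/
lemma kmin_eq_char {c : Fin n → Fin n} (hc : kmin c = c) (g : Fin n → β) :
    kmin g = c ↔ ∀ s t, g s = g t ↔ c s = c t := by
  constructor
  · intro h s t
    rw [← kmin_eq_iff g, h]
  · intro h
    funext t
    have : kmin g t = kmin c t := min'_eq_of_eq (by ext u; simp [h])
    rw [this, hc]

open Finset in
lemma fiber_card (N : ℕ) (c : Fin n → Fin n) (hc : kmin c = c) :
    ((Fintype.piFinset fun _ : Fin n => Finset.range N).filter fun g => kmin g = c).card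
      = N.descFactorial (univ.image c).card := by
  classical
  have hidem := kmin_apply_self hc
  have hfix : ∀ i ∈ univ.image c, c i = i := by
    intro i hi; obtain ⟨t, -, rfl⟩ := mem_image.mp hi; exact hidem t
  have hmem : ∀ t, c t ∈ univ.image c := fun t => mem_image_of_mem c (mem_univ t)
  have key : ∀ g ∈ (Fintype.piFinset fun _ : Fin n => Finset.range N).filter
      fun g => kmin g = c, (∀ t, g t < N) ∧ ∀ s t, g s = g t ↔ c s = c t := by
    intro g hg
    rw [mem_filter, Fintype.mem_piFinset] at hg
    exact ⟨fun t => mem_range.mp (hg.1 t), (kmin_eq_char hc g).mp hg.2⟩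
  have hrhs : N.descFactorial (univ.image c).card
      = (Finset.univ (α := (↥(univ.image c) ↪ Fin N))).card := by
    rw [Finset.card_univ, Fintype.card_embedding_eq, Fintype.card_coe, Fintype.card_fin]
  rw [hrhs]
  refine Finset.card_bij'
    (fun g hg => ⟨fun i => ⟨g i.1, (key g hg).1 i.1⟩, fun i1 i2 h => ?_⟩)
    (fun e _ => fun t => (e ⟨c t, hmem t⟩ : Fin N).1) (fun _ _ => mem_univ _) ?_ ?_ ?_
  · -- injectivity of the forward embedding
    have h1 : g i1.1 = g i2.1 := congrArg Fin.val h
    have h2 : c i1.1 = c i2.1 := ((key g hg).2 _ _).mp h1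
    rw [hfix _ i1.2, hfix _ i2.2] at h2
    exact Subtype.ext h2
  · -- j maps into the filter
    intro e _
    rw [mem_filter, Fintype.mem_piFinset]
    refine ⟨fun t => mem_range.mpr (e ⟨c t, hmem t⟩).isLt, ?_⟩
    rw [kmin_eq_char hc]
    intro s t
    rw [Fin.val_eq_val, e.apply_eq_iff_eq, Subtype.mk.injEq]
  · -- left inverse
    intro g hg
    funext t
    show (g (c t) : ℕ) = g t
    exact ((key g hg).2 (c t) t).mpr (hidem t)
  · -- right inverse
    intro e _
    ext i
    show (e ⟨c i.1, hmem i.1⟩ : Fin N).1 = (e i : Fin N).1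
    have : (⟨c i.1, hmem i.1⟩ : {x // x ∈ univ.image c}) = i := Subtype.ext (hfix _ i.2)
    rw [this]

end Kmin

section Analysis
open Finset
open scoped ENNReal
variable {Ω : Type*} {mΩ : MeasurableSpace Ω} {μ : Measure Ω} [IsProbabilityMeasure μ]

private lemma exp_arith (ℓ m : ℕ) :
    (1 : ℝ≥0∞) / ((ℓ : ℝ≥0∞) / ((m : ℝ≥0∞) + 1)) = 1 / (ℓ : ℝ≥0∞) + 1 / ((ℓ : ℝ≥0∞) / m) := by
  rcases eq_or_ne (ℓ : ℝ≥0∞) 0 with h | h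
  · simp [h]
  · have hℓtop : (ℓ : ℝ≥0∞) ≠ ∞ := ENNReal.natCast_ne_top ℓ
    simp only [one_div]
    rw [ENNReal.inv_div (Or.inr hℓtop) (Or.inr h), ENNReal.inv_div (Or.inr hℓtop) (Or.inr h)]
    have e1 : (ℓ : ℝ≥0∞)⁻¹ = 1 / ℓ := (one_div _).symm
    rw [e1, ENNReal.div_add_div_same]
    congr 1
    rw [add_comm]

lemma memLp_prod {ι : Type*} (ℓ : ℕ) (F : ι → Ω → ℝ) (s : Finset ι)
    (h : ∀ t ∈ s, MemLp (F t) ℓ μ) :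
    MemLp (fun ω => ∏ t ∈ s, F t ω) ((ℓ : ℝ≥0∞) / s.card) μ := by
  classical
  induction s using Finset.cons_induction with
  | empty => simpa using memLp_const (μ := μ) (1 : ℝ)
  | cons a s ha ih =>
    have h1 : MemLp (F a) ℓ μ := h a (Finset.mem_cons_self a s)
    have h2 := ih fun t ht => h t (Finset.mem_cons_of_mem ht)
    have h3 : MemLp (F a • fun ω => ∏ t ∈ s, F t ω) ((ℓ : ℝ≥0∞) / (s.card + 1)) μ :=
      h2.smul h1 (hpqr := ⟨by simpa only [one_div] using (exp_arith ℓ s.card).symm⟩)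
    have hc : ((Finset.cons a s ha).card : ℝ≥0∞) = (s.card : ℝ≥0∞) + 1 := by
      rw [Finset.card_cons]; push_cast; ring
    rw [show ((ℓ : ℝ≥0∞) / (Finset.cons a s ha).card) = (ℓ : ℝ≥0∞) / ((s.card : ℝ≥0∞) + 1) by
      rw [hc]]
    have : (F a • fun ω => ∏ t ∈ s, F t ω) = fun ω => ∏ t ∈ Finset.cons a s ha, F t ω := by
      funext ω; rw [Finset.prod_cons]; rfl
    rwa [this] at h3

lemma integrable_prod_of_memLp {ι : Type*} (ℓ : ℕ) (F : ι → Ω → ℝ) (s : Finset ι)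
    (h : ∀ t ∈ s, MemLp (F t) ℓ μ) (hcard : s.card ≤ ℓ) :
    Integrable (fun ω => ∏ t ∈ s, F t ω) μ := by
  rcases Finset.eq_empty_or_nonempty s with rfl | hs
  · simpa using integrable_const (1 : ℝ)
  · have hcard0 : ((s.card : ℝ≥0∞)) ≠ 0 := by
      simpa using hs.card_pos.ne'
    have hone : (1 : ℝ≥0∞) ≤ (ℓ : ℝ≥0∞) / s.card := by
      rw [ENNReal.le_div_iff_mul_le (Or.inl hcard0) (Or.inl (ENNReal.natCast_ne_top _)), one_mul]
      exact_mod_cast hcard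
    exact memLp_one_iff_integrable.mp ((memLp_prod ℓ F s h).mono_exponent hone)

lemma indep_integral_prod {Y : ℕ → Ω → ℝ}
    (h : iIndepFun Y μ) (hm : ∀ i, Measurable (Y i)) (I : Finset ℕ) :
    ∫ ω, ∏ i ∈ I, Y i ω ∂μ = ∏ i ∈ I, ∫ ω, Y i ω ∂μ := by
  classical
  induction I using Finset.cons_induction with
  | empty => simp
  | cons a s ha ih =>
    have hI : IndepFun (∏ j ∈ s, Y j) (Y a) μ := h.indepFun_finset_prod_of_notMem hm ha
    have hfun : (∏ j ∈ s, Y j) = fun ω => ∏ j ∈ s, Y j ω := by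
      funext ω; simp [Finset.prod_apply]
    have hprod : Measurable (∏ j ∈ s, Y j) := by
      rw [hfun]; exact Finset.measurable_prod s (fun i _ => hm i)
    have hpt : ∀ ω, ∏ i ∈ Finset.cons a s ha, Y i ω = (∏ j ∈ s, Y j) ω * Y a ω := by
      intro ω; rw [Finset.prod_cons, hfun, mul_comm]
    calc ∫ ω, ∏ i ∈ Finset.cons a s ha, Y i ω ∂μ
        = ∫ ω, (∏ j ∈ s, Y j) ω * Y a ω ∂μ := by simp only [hpt]
      _ = (∫ ω, (∏ j ∈ s, Y j) ω ∂μ) * ∫ ω, Y a ω ∂μ :=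
          hI.integral_mul_eq_mul_integral hprod.aestronglyMeasurable (hm a).aestronglyMeasurable
      _ = ∏ i ∈ Finset.cons a s ha, ∫ ω, Y i ω ∂μ := by
          rw [Finset.prod_cons, ← ih, mul_comm]
          congr 1
          · rw [hfun]

end Analysis

section Defs
open Finset
variable {Ω : Type*} [MeasurableSpace Ω]

/-- joint moment of `ζ0` over the index set `s`. -/
noncomputable def Mint (μ : Measure Ω) {d n : ℕ} (ζ0 : Ω → Fin d → ℝ) (f : Fin n → Fin d)
    (s : Finset (Fin n)) : ℝ :=
  ∫ ω, ∏ t ∈ s, ζ0 ω (f t) ∂μ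

/-- product of joint moments over the fibers of `c`. -/
noncomputable def Vv (μ : Measure Ω) {d n : ℕ} (ζ0 : Ω → Fin d → ℝ) (f : Fin n → Fin d)
    (c : Fin n → Fin n) : ℝ :=
  ∏ i ∈ univ.image c, Mint μ ζ0 f (univ.filter fun s => c s = i)

/-- the moment polynomial. -/
noncomputable def Rr (μ : Measure Ω) {d n : ℕ} (ζ0 : Ω → Fin d → ℝ) (f : Fin n → Fin d) :
    Polynomial ℝ :=
  ∑ c : Fin n → Fin n, if kmin c = c then
    Vv μ ζ0 f c • descPochhammer ℝ ((univ.image c).card) else 0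

open Finset in
lemma Vv_kmin (μ : Measure Ω) {d n : ℕ} (ζ0 : Ω → Fin d → ℝ) (f : Fin n → Fin d)
    (g : Fin n → ℕ) :
    ∏ i ∈ univ.image g, Mint μ ζ0 f (univ.filter fun t => g t = i) = Vv μ ζ0 f (kmin g) := by
  rcases Nat.eq_zero_or_pos n with rfl | hn
  · simp [Vv]
  · have : Nonempty (Fin n) := ⟨⟨0, hn⟩⟩
    set w : ℕ → Fin n := Function.invFun g with hwdef
    have hw : ∀ a ∈ univ.image g, g (w a) = a := by
      intro a ha
      obtain ⟨t, -, rfl⟩ := Finset.mem_image.mp ha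
      exact Function.invFun_eq ⟨t, rfl⟩
    unfold Vv
    refine Finset.prod_bij (fun a _ => kmin g (w a)) ?_ ?_ ?_ ?_
    · intro a ha; exact mem_image_of_mem _ (mem_univ _)
    · intro a1 ha1 a2 ha2 h
      rw [kmin_eq_iff] at h
      rw [← hw a1 ha1, ← hw a2 ha2, h]
    · intro b hb
      obtain ⟨t, -, rfl⟩ := Finset.mem_image.mp hb
      refine ⟨g t, mem_image_of_mem g (mem_univ t), ?_⟩
      exact kmin_congr g (hw (g t) (mem_image_of_mem g (mem_univ t)))
    · intro a ha
      congr 1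
      ext u
      simp only [Finset.mem_filter, Finset.mem_univ, true_and]
      rw [kmin_eq_iff g, hw a ha]
end Defs

open Finset

theorem stmt15 {Ω : Type*} {mΩ : MeasurableSpace Ω} (μ : Measure Ω) [IsProbabilityMeasure μ]
    (d ℓ : ℕ) (ζ : ℕ → Ω → (Fin d → ℝ))
    (hmeas : ∀ i, Measurable (ζ i))
    (hindep : iIndepFun ζ μ)
    (hident : ∀ i, IdentDistrib (ζ i) (ζ 0) μ μ)
    (hmean : ∫ ω, ζ 0 ω ∂μ = 0)
    (hLℓ : MemLp (ζ 0) ℓ μ) :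
    ∃ R : (Fin ℓ → Fin d) → Polynomial ℝ,
      (∀ f, (R f).natDegree ≤ ℓ / 2) ∧
      ∀ N : ℕ, ℓ ≤ N → ∀ f : Fin ℓ → Fin d,
        ∫ ω, ∏ t : Fin ℓ, (∑ i ∈ Finset.range N, ζ i ω (f t)) ∂μ
          = (R f).eval (N : ℝ) := by
  classical
  -- coordinates are in Lℓ
  have hcoord : ∀ (i : ℕ) (j : Fin d), MemLp (fun ω => ζ i ω j) ℓ μ := by
    intro i j
    have h0 : MemLp (fun ω => ζ 0 ω j) ℓ μ := by
      have := (ContinuousLinearMap.proj (R := ℝ) (φ := fun _ : Fin d => ℝ) j).comp_memLp' hLℓ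
      exact this
    exact ((hident i).comp (measurable_pi_apply j)).memLp_iff.mpr h0
  -- mean-zero coordinates (for ℓ ≥ 1)
  have hmean' : 0 < ℓ → ∀ j : Fin d, ∫ ω, ζ 0 ω j ∂μ = 0 := by
    intro hℓ j
    have h1 : (1 : ℝ≥0∞) ≤ (ℓ : ℝ≥0∞) := by exact_mod_cast hℓ
    have hint : Integrable (ζ 0) μ := hLℓ.integrable h1
    have := (ContinuousLinearMap.proj (R := ℝ) (φ := fun _ : Fin d => ℝ) j).integral_comp_comm
      hint
    rw [hmean] at this
    simpa using this
  refine ⟨fun f => Rr μ (ζ 0) f, ?_, ?_⟩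
  · -- degree bound
    intro f
    refine Polynomial.natDegree_sum_le_of_forall_le _ _ ?_
    intro c _
    by_cases hc : kmin c = c
    · rw [if_pos hc]
      by_cases hV : Vv μ (ζ 0) f c = 0
      · simp [hV]
      · refine (Polynomial.natDegree_smul_le _ _).trans ?_
        rw [descPochhammer_natDegree]
        have hidem := kmin_apply_self hc
        -- every fiber has at least two elements
        have hfib2 : ∀ i ∈ univ.image c, 2 ≤ (univ.filter fun s => c s = i).card := by
          intro i hi
          obtain ⟨t, -, rfl⟩ := Finset.mem_image.mp hi
          by_contra hlt
          push_neg at hlt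
          have hii : c t ∈ univ.filter fun s => c s = c t := by
            simp [hidem t]
          have hpos : 0 < (univ.filter fun s => c s = c t).card :=
            Finset.card_pos.mpr ⟨c t, hii⟩
          have h1 : (univ.filter fun s => c s = c t).card = 1 := by omega
          obtain ⟨a, haa⟩ := Finset.card_eq_one.mp h1
          have hai : a = c t := by
            have := hii
            rw [haa, Finset.mem_singleton] at this
            exact this.symm
          have hM : Mint μ (ζ 0) f (univ.filter fun s => c s = c t) = 0 := by
            rw [haa, hai]
            unfold Mint
            simp only [Finset.prod_singleton]
            exact hmean' t.pos (f (c t))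
          exact hV (Finset.prod_eq_zero (Finset.mem_image_of_mem c (mem_univ t)) hM)
        have hsum : ℓ = ∑ i ∈ univ.image c, (univ.filter fun s => c s = i).card := by
          have := Finset.card_eq_sum_card_fiberwise
            (f := c) (t := univ.image c)
            (fun t (_ : t ∈ (univ : Finset (Fin ℓ))) => Finset.mem_image_of_mem c (mem_univ t))
          simpa using this
        have hle : (univ.image c).card * 2
            ≤ ∑ i ∈ univ.image c, (univ.filter fun s => c s = i).card := by
          calc (univ.image c).card * 2 = ∑ _i ∈ univ.image c, 2 := by
                rw [Finset.sum_const, smul_eq_mul, mul_comm]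
          _ ≤ ∑ i ∈ univ.image c, (univ.filter fun s => c s = i).card :=
                Finset.sum_le_sum hfib2
        have h2k : (univ.image c).card * 2 ≤ ℓ := le_trans hle (le_of_eq hsum.symm)
        exact (Nat.le_div_iff_mul_le (by norm_num)).mpr h2k
    · rw [if_neg hc]
      simp
  · -- the moment identity
    intro N _ f
    have Hint : ∀ g : Fin ℓ → ℕ, Integrable (fun ω => ∏ t : Fin ℓ, ζ (g t) ω (f t)) μ := by
      intro g
      exact integrable_prod_of_memLp ℓ (fun t ω => ζ (g t) ω (f t)) univ
        (fun t _ => hcoord (g t) (f t)) (by simp)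
    have KEY : ∀ g : Fin ℓ → ℕ,
        ∫ ω, ∏ t : Fin ℓ, ζ (g t) ω (f t) ∂μ = Vv μ (ζ 0) f (kmin g) := by
      intro g
      have hpt : ∀ ω, ∏ t : Fin ℓ, ζ (g t) ω (f t)
          = ∏ i ∈ univ.image g, ∏ t ∈ univ.filter fun t => g t = i, ζ i ω (f t) := by
        intro ω
        rw [← Finset.prod_fiberwise_of_maps_to
          (fun t (_ : t ∈ (univ : Finset (Fin ℓ))) => Finset.mem_image_of_mem g (mem_univ t))
          (fun t => ζ (g t) ω (f t))]
        exact Finset.prod_congr rfl fun i _ => Finset.prod_congr rfl fun t ht => by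
          rw [(Finset.mem_filter.mp ht).2]
      have hφ : ∀ i : ℕ, Measurable
          (fun x : Fin d → ℝ => ∏ t ∈ univ.filter fun t => g t = i, x (f t)) :=
        fun i => Finset.measurable_prod _ fun t _ => measurable_pi_apply (f t)
      have hYind : iIndepFun
          (fun i ω => ∏ t ∈ univ.filter fun t => g t = i, ζ i ω (f t)) μ :=
        hindep.comp (fun i x => ∏ t ∈ univ.filter fun t => g t = i, x (f t)) hφ
      have hYmeas : ∀ i, Measurable
          (fun ω => ∏ t ∈ univ.filter fun t => g t = i, ζ i ω (f t)) :=
        fun i => (hφ i).comp (hmeas i)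
      have hfac := indep_integral_prod hYind hYmeas (univ.image g)
      have hid : ∀ i : ℕ, ∫ ω, ∏ t ∈ univ.filter fun t => g t = i, ζ i ω (f t) ∂μ
          = Mint μ (ζ 0) f (univ.filter fun t => g t = i) := by
        intro i
        exact ((hident i).comp (hφ i)).integral_eq
      calc ∫ ω, ∏ t : Fin ℓ, ζ (g t) ω (f t) ∂μ
          = ∫ ω, ∏ i ∈ univ.image g, ∏ t ∈ univ.filter fun t => g t = i, ζ i ω (f t) ∂μ := by
            simp only [hpt]
        _ = ∏ i ∈ univ.image g, ∫ ω, ∏ t ∈ univ.filter fun t => g t = i, ζ i ω (f t) ∂μ :=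
            hfac
        _ = ∏ i ∈ univ.image g, Mint μ (ζ 0) f (univ.filter fun t => g t = i) :=
            Finset.prod_congr rfl fun i _ => hid i
        _ = Vv μ (ζ 0) f (kmin g) := Vv_kmin μ (ζ 0) f g
    have hA : ∀ ω : Ω, ∏ t : Fin ℓ, ∑ i ∈ Finset.range N, ζ i ω (f t)
        = ∑ g ∈ Fintype.piFinset (fun _ : Fin ℓ => Finset.range N),
            ∏ t : Fin ℓ, ζ (g t) ω (f t) :=
      fun ω => Finset.prod_univ_sum _ _
    calc ∫ ω, ∏ t : Fin ℓ, (∑ i ∈ Finset.range N, ζ i ω (f t)) ∂μ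
        = ∫ ω, ∑ g ∈ Fintype.piFinset (fun _ : Fin ℓ => Finset.range N),
            ∏ t : Fin ℓ, ζ (g t) ω (f t) ∂μ := by simp only [hA]
      _ = ∑ g ∈ Fintype.piFinset (fun _ : Fin ℓ => Finset.range N),
            ∫ ω, ∏ t : Fin ℓ, ζ (g t) ω (f t) ∂μ :=
          integral_finset_sum _ (fun g _ => Hint g)
      _ = ∑ g ∈ Fintype.piFinset (fun _ : Fin ℓ => Finset.range N), Vv μ (ζ 0) f (kmin g) :=
          Finset.sum_congr rfl fun g _ => KEY g
      _ = ∑ c : Fin ℓ → Fin ℓ, ∑ g ∈ (Fintype.piFinset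
            (fun _ : Fin ℓ => Finset.range N)).filter (fun g => kmin g = c),
            Vv μ (ζ 0) f (kmin g) :=
          (Finset.sum_fiberwise_of_maps_to (fun g _ => mem_univ (kmin g)) _).symm
      _ = ∑ c : Fin ℓ → Fin ℓ, (if kmin c = c then
            (N.descFactorial ((univ.image c).card)) • Vv μ (ζ 0) f c else 0) := by
          refine Finset.sum_congr rfl fun c _ => ?_
          have hconst : ∑ g ∈ (Fintype.piFinset
              (fun _ : Fin ℓ => Finset.range N)).filter (fun g => kmin g = c),
              Vv μ (ζ 0) f (kmin g)
              = ((Fintype.piFinset (fun _ : Fin ℓ => Finset.range N)).filter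
                  (fun g => kmin g = c)).card • Vv μ (ζ 0) f c := by
            rw [← Finset.sum_const]
            exact Finset.sum_congr rfl fun g hg => by rw [(Finset.mem_filter.mp hg).2]
          rw [hconst]
          by_cases hc : kmin c = c
          · rw [if_pos hc, fiber_card N c hc]
          · rw [if_neg hc]
            have hempty : (Fintype.piFinset (fun _ : Fin ℓ => Finset.range N)).filter
                (fun g => kmin g = c) = ∅ := by
              rw [Finset.filter_eq_empty_iff]
              intro g _ hgc
              apply hc
              rw [← hgc]
              exact kmin_kmin g
            rw [hempty]
            simp
      _ = (Rr μ (ζ 0) f).eval (N : ℝ) := by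
          unfold Rr
          rw [Polynomial.eval_finset_sum]
          refine Finset.sum_congr rfl fun c _ => ?_
          by_cases hc : kmin c = c
          · rw [if_pos hc, if_pos hc, Polynomial.eval_smul, smul_eq_mul,
              descPochhammer_eval_eq_descFactorial, nsmul_eq_mul, mul_comm]
          · rw [if_neg hc, if_neg hc, Polynomial.eval_zero]
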